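/- Φ_n is a bijection (a permutation of {0,1}^n), and the orbit of (0,0,…,0) under Φ_n is all of {0,1}^n. -/

import Mathlib

/-- The prefix `(x₁,…,x_m)` (1-indexed) of `x ∈ {0,1}ⁿ` is alternating:
consecutive entries differ. -/
def AltPrefix (n : ℕ) (x : Fin n → Bool) (m : ℕ) : Prop :=
  ∀ j : ℕ, j + 1 < m → ∀ hn : j + 1 < n,
    x ⟨j, Nat.lt_of_succ_lt hn⟩ ≠ x ⟨j + 1, hn⟩

instance (n : ℕ) (x : Fin n → Bool) : DecidablePred (AltPrefix n x) := fun m =>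
  decidable_of_iff
    (∀ j ∈ Finset.range n, j + 1 < m → ∀ hn : j + 1 < n,
      x ⟨j, Nat.lt_of_succ_lt hn⟩ ≠ x ⟨j + 1, hn⟩)
    (by
      constructor
      · intro h j hj hn
        exact h j (Finset.mem_range.mpr (Nat.lt_of_succ_lt hn)) hj hn
      · intro h j _ hj hn
        exact h j hj hn)

/-- The largest `m ≤ n` such that the prefix `(x₁,…,x_m)` is alternating. -/
def mIdx (n : ℕ) (x : Fin n → Bool) : ℕ :=
  Nat.findGreatest (AltPrefix n x) n

/-- The map `Φₙ : {0,1}ⁿ → {0,1}ⁿ`: with `m` the largest index such that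
`(x₁,…,x_m)` is alternating, `yᵢ = 1 - x_m` for `i ≤ m` and `yᵢ = xᵢ` for `i > m`. -/
def Phi (n : ℕ) (x : Fin n → Bool) : Fin n → Bool :=
  fun i =>
    if _h : (i : ℕ) < mIdx n x then
      ! x ⟨mIdx n x - 1, by
        have h2 : mIdx n x ≤ n := Nat.findGreatest_le n
        omega⟩
    else x i

/-- The alternating vector `(…,1,0,1,0)`: `x_j = 1` iff `j ≢ n (mod 2)` (1-indexed). -/
def altEnd0 (n : ℕ) : Fin n → Bool := fun i => decide (((i : ℕ) + 1) % 2 ≠ n % 2)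

/-- The alternating vector `(…,0,1,0,1)`: `x_j = 1` iff `j ≡ n (mod 2)` (1-indexed). -/
def altEnd1 (n : ℕ) : Fin n → Bool := fun i => decide (((i : ℕ) + 1) % 2 = n % 2)

/-- The bit `c_j` (0-indexed `j`): XOR of consecutive bits `x_j, x_{j+1}`,
and for the last position the bit itself. -/
def cbit (n : ℕ) (x : Fin n → Bool) (j : Fin n) : Bool :=
  if h : (j : ℕ) + 1 < n then xor (x j) (x ⟨(j : ℕ) + 1, h⟩) else x j

/-- The map `rₙ(x) = Σ_{j=1}^n c_j 2^{j-1}`. -/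
def rmap (n : ℕ) (x : Fin n → Bool) : ℕ :=
  ∑ j : Fin n, (if cbit n x j then 1 else 0) * 2 ^ (j : ℕ)

/-- The recursively defined weights `w_{n,i,j}` (all indices 1-based; values for
indices outside `1 ≤ i, j ≤ n` are irrelevant junk). -/
def wgt : ℕ → ℕ → ℕ → ℤ
  | 0, _, _ => 0
  | 1, _, _ => -1
  | (n+2), i, j =>
    if i = n + 2 then
      (if j = n + 2 then (n : ℤ)
       else if j % 2 = (n + 2) % 2 then -1 else 1)
    else if i = n + 1 then
      (if j = n + 2 then -1
       else if j = n + 1 then wgt (n+1) (n+1) j + 1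
       else wgt (n+1) (n+1) j)
    else
      (if j = n + 2 then -1
       else if j = n + 1 then wgt (n+1) i j
       else wgt (n+1) i j + wgt n i j)

/-- The recursively defined thresholds `θ_{n,i}`. -/
def thr : ℕ → ℕ → ℤ
  | 0, _ => 0
  | 1, _ => 0
  | (n+2), i =>
    if i = n + 2 then (((n + 2) / 2 : ℕ) : ℤ)
    else if i = n + 1 then thr (n+1) (n+1)
    else thr (n+1) i + thr n i - 1


section Aux

/-- Binary sum of a bit function over `range n`. -/
def bsum (f : ℕ → Bool) (n : ℕ) : ℕ :=
  ∑ j ∈ Finset.range n, (if f j then 1 else 0) * 2 ^ j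

lemma bsum_succ (f : ℕ → Bool) (n : ℕ) :
    bsum f (n + 1) = bsum f n + (if f n then 1 else 0) * 2 ^ n :=
  Finset.sum_range_succ _ _

lemma bsum_lt (f : ℕ → Bool) (n : ℕ) : bsum f n < 2 ^ n := by
  induction n with
  | zero => simp [bsum]
  | succ n ih =>
    rw [bsum_succ]
    have h2 : 2 ^ (n + 1) = 2 ^ n + 2 ^ n := by ring
    split <;> omega

lemma testBit_bsum (f : ℕ → Bool) (n k : ℕ) (hk : k < n) :
    (bsum f n).testBit k = f k := by
  induction n with
  | zero => omega
  | succ n ih =>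
    rw [bsum_succ]
    rcases Nat.lt_or_ge k n with h | h
    · cases hfn : f n
      · simpa using ih h
      · simp only [if_true, one_mul]
        rw [Nat.add_comm, Nat.testBit_two_pow_add_gt h]
        exact ih h
    · have hkn : k = n := by omega
      subst hkn
      have hb := bsum_lt f k
      cases hfn : f k
      · simpa using Nat.testBit_lt_two_pow hb
      · simp only [if_true, one_mul]
        rw [Nat.add_comm, Nat.testBit_two_pow_add_eq]
        simp [Nat.testBit_lt_two_pow hb]

lemma bsum_inj {f g : ℕ → Bool} {n : ℕ} (h : bsum f n = bsum g n) :
    ∀ k, k < n → f k = g k := by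
  intro k hk
  rw [← testBit_bsum f n k hk, ← testBit_bsum g n k hk, h]

lemma bsum_true {f : ℕ → Bool} {n : ℕ} (h : ∀ k, k < n → f k = true) :
    bsum f n = 2 ^ n - 1 := by
  induction n with
  | zero => simp [bsum]
  | succ n ih =>
    rw [bsum_succ, ih (fun k hk => h k (by omega)), h n (by omega)]
    simp only [if_pos rfl, if_true, one_mul]
    have h1 : 1 ≤ 2 ^ n := Nat.one_le_two_pow
    have h2 : 2 ^ (n + 1) = 2 ^ n + 2 ^ n := by ring
    omega

lemma bsum_false {f : ℕ → Bool} {n : ℕ} (h : ∀ k, k < n → f k = false) :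
    bsum f n = 0 := by
  apply Finset.sum_eq_zero
  intro j hj
  rw [h j (Finset.mem_range.mp hj)]
  simp

/-- The bit function of `x` as a function on `ℕ`. -/
def fC (n : ℕ) (x : Fin n → Bool) : ℕ → Bool :=
  fun j => if h : j < n then cbit n x ⟨j, h⟩ else false

lemma rmap_eq_bsum (n : ℕ) (x : Fin n → Bool) : rmap n x = bsum (fC n x) n := by
  rw [rmap, bsum, ← Fin.sum_univ_eq_sum_range]
  apply Finset.sum_congr rfl
  intro i _
  simp [fC, i.isLt]

lemma eq_of_cbit_eq {n : ℕ} {x x' : Fin n → Bool}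
    (h : ∀ i : Fin n, cbit n x i = cbit n x' i) : x = x' := by
  have key : ∀ d : ℕ, ∀ i : Fin n, n - (i : ℕ) ≤ d + 1 → x i = x' i := by
    intro d
    induction d with
    | zero =>
      intro i hi
      have hi' : ¬ ((i : ℕ) + 1 < n) := by have := i.isLt; omega
      have := h i
      rwa [cbit, cbit, dif_neg hi', dif_neg hi'] at this
    | succ d ihd =>
      intro i hi
      by_cases hi' : (i : ℕ) + 1 < n
      · have hnext : x ⟨(i : ℕ) + 1, hi'⟩ = x' ⟨(i : ℕ) + 1, hi'⟩ := by
          apply ihd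
          simp only []
          omega
        have := h i
        rw [cbit, cbit, dif_pos hi', dif_pos hi', hnext] at this
        revert this
        cases x' ⟨(i : ℕ) + 1, hi'⟩ <;> cases x i <;> cases x' i <;> simp
      · have := h i
        rwa [cbit, cbit, dif_neg hi', dif_neg hi'] at this
  funext i
  exact key n i (by omega)

lemma rmap_inj {n : ℕ} {x x' : Fin n → Bool} (h : rmap n x = rmap n x') : x = x' := by
  rw [rmap_eq_bsum, rmap_eq_bsum] at h
  apply eq_of_cbit_eq
  intro i
  have := bsum_inj h (i : ℕ) i.isLt
  rwa [fC, fC, dif_pos i.isLt, dif_pos i.isLt] at this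

lemma mIdx_pos {n : ℕ} (hn : 0 < n) (x : Fin n → Bool) : 1 ≤ mIdx n x :=
  Nat.le_findGreatest hn (fun j hj => absurd hj (by omega))

lemma altPrefix_mIdx {n : ℕ} (hn : 0 < n) (x : Fin n → Bool) : AltPrefix n x (mIdx n x) := by
  rcases Nat.eq_zero_or_pos (mIdx n x) with h | h
  · intro j hj hn'; omega
  · exact Nat.findGreatest_of_ne_zero rfl (by omega)

lemma mIdx_max {n : ℕ} (hn : 0 < n) (x : Fin n → Bool) (h : mIdx n x < n) :
    x ⟨mIdx n x - 1, by omega⟩ = x ⟨mIdx n x, h⟩ := by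
  have hm1 := mIdx_pos hn x
  by_contra hne
  have halt : AltPrefix n x (mIdx n x + 1) := by
    intro j hj hn'
    rcases Nat.lt_or_ge (j + 1) (mIdx n x) with hj' | hj'
    · exact altPrefix_mIdx hn x j hj' hn'
    · have hj2 : j + 1 = mIdx n x := by omega
      have e1 : (⟨j, Nat.lt_of_succ_lt hn'⟩ : Fin n) = ⟨mIdx n x - 1, by omega⟩ :=
        Fin.ext (by simp; omega)
      have e2 : (⟨j + 1, hn'⟩ : Fin n) = ⟨mIdx n x, h⟩ := Fin.ext (by simp; omega)
      rw [e1, e2]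
      exact hne
  exact Nat.findGreatest_is_greatest (Nat.lt_succ_self _) h halt

lemma rmap_Phi (n : ℕ) (hn : 0 < n) (x : Fin n → Bool) :
    rmap n (Phi n x) = (rmap n x + 1) % 2 ^ n := by
  have hm1 : 1 ≤ mIdx n x := mIdx_pos hn x
  have hmn : mIdx n x ≤ n := Nat.findGreatest_le n
  set m := mIdx n x with hm
  have hxm1 : m - 1 < n := by omega
  have halt := altPrefix_mIdx hn x
  have hy_lt : ∀ i : Fin n, (i : ℕ) < m → Phi n x i = !x ⟨m - 1, hxm1⟩ := by
    intro i h
    rw [Phi, dif_pos (by rw [← hm]; exact h)]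
  have hy_ge : ∀ i : Fin n, m ≤ (i : ℕ) → Phi n x i = x i := by
    intro i h
    rw [Phi, dif_neg (by rw [← hm]; omega)]
  by_cases hA : m = n ∧ x ⟨m - 1, hxm1⟩ = true
  · obtain ⟨hmn', hx1⟩ := hA
    have hcx : ∀ j : Fin n, cbit n x j = true := by
      intro j
      by_cases hj : (j : ℕ) + 1 < n
      · rw [cbit, dif_pos hj]
        have hne := halt (j : ℕ) (by omega) hj
        revert hne
        cases x ⟨(j : ℕ), Nat.lt_of_succ_lt hj⟩ <;> cases x ⟨(j : ℕ) + 1, hj⟩ <;> simp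
      · rw [cbit, dif_neg hj]
        have : j = ⟨m - 1, hxm1⟩ := Fin.ext (by simp; omega)
        rw [this, hx1]
    have hrx : rmap n x = 2 ^ n - 1 := by
      rw [rmap_eq_bsum]
      apply bsum_true
      intro k hk
      rw [fC, dif_pos hk]
      exact hcx _
    have hy : Phi n x = fun _ => false := by
      funext i
      rw [hy_lt i (by omega), hx1]
      rfl
    have hry : rmap n (Phi n x) = 0 := by
      rw [rmap_eq_bsum]
      apply bsum_false
      intro k hk
      rw [fC, dif_pos hk, hy, cbit]
      split <;> rfl
    rw [hry, hrx]
    have h1 : 1 ≤ 2 ^ n := Nat.one_le_two_pow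
    rw [show 2 ^ n - 1 + 1 = 2 ^ n by omega, Nat.mod_self]
  · -- main case
    have hcx_lt : ∀ k (hk : k + 1 < m), cbit n x ⟨k, by omega⟩ = true := by
      intro k hk
      have hk' : k + 1 < n := by omega
      rw [cbit, dif_pos hk']
      have hne := halt k hk hk'
      revert hne
      cases x ⟨k, Nat.lt_of_succ_lt hk'⟩ <;> cases x ⟨k + 1, hk'⟩ <;> simp
    have hcx_m : cbit n x ⟨m - 1, hxm1⟩ = false := by
      by_cases h : m < n
      · have h' : (m - 1 : ℕ) + 1 < n := by omega
        have heq : x ⟨m - 1, hxm1⟩ = x ⟨m, h⟩ := mIdx_max hn x h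
        rw [cbit, dif_pos h']
        show (x ⟨m - 1, hxm1⟩ ^^ x ⟨m - 1 + 1, h'⟩) = false
        have e2 : x ⟨m - 1 + 1, h'⟩ = x ⟨m, h⟩ := congrArg x (Fin.ext (by simp; omega))
        rw [e2, ← heq, Bool.xor_self]
      · have hmn' : m = n := by omega
        have hx0 : x ⟨m - 1, hxm1⟩ = false := by
          rcases Bool.eq_false_or_eq_true (x ⟨m - 1, hxm1⟩) with h' | h'
          · exact absurd ⟨hmn', h'⟩ hA
          · exact h'
        rw [cbit, dif_neg (by simp; omega)]
        exact hx0
    have hcy_lt : ∀ k (hk : k + 1 < m), cbit n (Phi n x) ⟨k, by omega⟩ = false := by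
      intro k hk
      have hk' : k + 1 < n := by omega
      rw [cbit, dif_pos hk', hy_lt ⟨k, _⟩ (by simp; omega), hy_lt ⟨k + 1, hk'⟩ (by simp; omega)]
      exact Bool.xor_self _
    have hcy_m : cbit n (Phi n x) ⟨m - 1, hxm1⟩ = true := by
      by_cases h : m < n
      · have h' : (m - 1 : ℕ) + 1 < n := by omega
        have heq : x ⟨m - 1, hxm1⟩ = x ⟨m, h⟩ := mIdx_max hn x h
        rw [cbit, dif_pos h', hy_lt ⟨m - 1, hxm1⟩ (by simp; omega)]
        show (!x ⟨m - 1, hxm1⟩ ^^ Phi n x ⟨m - 1 + 1, h'⟩) = true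
        have e2 : (⟨m - 1 + 1, h'⟩ : Fin n) = ⟨m, h⟩ := Fin.ext (by simp; omega)
        rw [e2, hy_ge ⟨m, h⟩ (by simp), ← heq]
        cases x ⟨m - 1, hxm1⟩ <;> rfl
      · have hx0 : x ⟨m - 1, hxm1⟩ = false := by
          rcases Bool.eq_false_or_eq_true (x ⟨m - 1, hxm1⟩) with h' | h'
          · exact absurd ⟨by omega, h'⟩ hA
          · exact h'
        rw [cbit, dif_neg (by simp; omega), hy_lt ⟨m - 1, hxm1⟩ (by simp; omega), hx0]
        rfl
    have hcy_ge : ∀ j : Fin n, m ≤ (j : ℕ) → cbit n (Phi n x) j = cbit n x j := by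
      intro j hj
      rw [cbit, cbit]
      by_cases h : (j : ℕ) + 1 < n
      · rw [dif_pos h, dif_pos h, hy_ge j hj, hy_ge ⟨(j : ℕ) + 1, h⟩ (by simp; omega)]
      · rw [dif_neg h, dif_neg h, hy_ge j hj]
    -- sums
    have hsplit : ∀ f : ℕ → Bool, bsum f n =
        bsum f m + ∑ j ∈ Finset.Ico m n, (if f j then 1 else 0) * 2 ^ j := by
      intro f
      rw [bsum, bsum, Finset.range_eq_Ico,
        ← Finset.sum_Ico_consecutive _ (Nat.zero_le m) hmn, Finset.range_eq_Ico]
    have hT : (∑ j ∈ Finset.Ico m n, (if fC n (Phi n x) j then 1 else 0) * 2 ^ j) =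
        ∑ j ∈ Finset.Ico m n, (if fC n x j then 1 else 0) * 2 ^ j := by
      apply Finset.sum_congr rfl
      intro j hj
      obtain ⟨hj1, hj2⟩ := Finset.mem_Ico.mp hj
      rw [fC, fC, dif_pos hj2, dif_pos hj2, hcy_ge ⟨j, hj2⟩ hj1]
    have hheadX : bsum (fC n x) m = 2 ^ (m - 1) - 1 := by
      rw [show m = (m - 1) + 1 by omega, bsum_succ]
      have h1 : bsum (fC n x) (m - 1) = 2 ^ (m - 1) - 1 := by
        apply bsum_true
        intro k hk
        rw [fC, dif_pos (by omega)]
        exact hcx_lt k (by omega)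
      have h2 : fC n x (m - 1) = false := by
        rw [fC, dif_pos hxm1]
        exact hcx_m
      rw [h1, h2]
      simp
    have hheadY : bsum (fC n (Phi n x)) m = 2 ^ (m - 1) := by
      rw [show m = (m - 1) + 1 by omega, bsum_succ]
      have h1 : bsum (fC n (Phi n x)) (m - 1) = 0 := by
        apply bsum_false
        intro k hk
        rw [fC, dif_pos (by omega)]
        exact hcy_lt k (by omega)
      have h2 : fC n (Phi n x) (m - 1) = true := by
        rw [fC, dif_pos hxm1]
        exact hcy_m
      rw [h1, h2]
      simp
    have hrx := rmap_eq_bsum n x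
    have hry := rmap_eq_bsum n (Phi n x)
    have hltY : rmap n (Phi n x) < 2 ^ n := by rw [hry]; exact bsum_lt _ _
    have heq : rmap n (Phi n x) = rmap n x + 1 := by
      rw [hrx, hry, hsplit, hsplit, hT, hheadX, hheadY]
      have h1 : 1 ≤ 2 ^ (m - 1) := Nat.one_le_two_pow
      omega
    rw [heq, Nat.mod_eq_of_lt (by omega)]

end Aux

/-- `Φₙ` is a permutation of `{0,1}ⁿ` and the orbit of `(0,…,0)` under `Φₙ`
is all of `{0,1}ⁿ`. -/
theorem Phi_bijective_orbit (n : ℕ) (hn : 0 < n) :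
    Function.Bijective (Phi n) ∧
    ∀ y : Fin n → Bool, ∃ t : ℕ, (Phi n)^[t] (fun _ => false) = y := by
  have hinj : Function.Injective (Phi n) := by
    intro a b hab
    apply rmap_inj (n := n)
    have ha := rmap_Phi n hn a
    have hb := rmap_Phi n hn b
    rw [hab, hb] at ha
    have ha' : rmap n a < 2 ^ n := by rw [rmap_eq_bsum]; exact bsum_lt _ _
    have hb' : rmap n b < 2 ^ n := by rw [rmap_eq_bsum]; exact bsum_lt _ _
    rcases Nat.lt_or_ge (rmap n a + 1) (2 ^ n) with h | h
    · rcases Nat.lt_or_ge (rmap n b + 1) (2 ^ n) with h' | h'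
      · rw [Nat.mod_eq_of_lt h, Nat.mod_eq_of_lt h'] at ha; omega
      · have hb2 : rmap n b + 1 = 2 ^ n := by omega
        rw [Nat.mod_eq_of_lt h, hb2, Nat.mod_self] at ha; omega
    · have ha2 : rmap n a + 1 = 2 ^ n := by omega
      rcases Nat.lt_or_ge (rmap n b + 1) (2 ^ n) with h' | h'
      · rw [Nat.mod_eq_of_lt h', ha2, Nat.mod_self] at ha; omega
      · omega
  refine ⟨Finite.injective_iff_bijective.mp hinj, ?_⟩
  have horbit : ∀ t : ℕ, rmap n ((Phi n)^[t] (fun _ => false)) = t % 2 ^ n := by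
    intro t
    induction t with
    | zero =>
      simp only [Function.iterate_zero, id_eq, Nat.zero_mod]
      rw [rmap_eq_bsum]
      apply bsum_false
      intro k hk
      rw [fC, dif_pos hk, cbit]
      split <;> rfl
    | succ t ih =>
      have h2 : 2 ≤ 2 ^ n := by
        calc 2 = 2 ^ 1 := rfl
        _ ≤ 2 ^ n := Nat.pow_le_pow_right (by norm_num) hn
      rw [Function.iterate_succ_apply', rmap_Phi n hn, ih]
      conv_rhs => rw [Nat.add_mod]
      rw [Nat.mod_eq_of_lt (show 1 < 2 ^ n by omega)]
  intro y
  refine ⟨rmap n y, ?_⟩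
  apply rmap_inj (n := n)
  rw [horbit]
  have hy' : rmap n y < 2 ^ n := by rw [rmap_eq_bsum]; exact bsum_lt _ _
  exact Nat.mod_eq_of_lt hy'
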